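/- For every real x ≥ 0, sin_{1/2}(x^{1/2}) = (2/√π) · e^{-x} · ∫_0^{√x} e^{t²} dt; that is, ∑_{k=0}^∞ (-1)^k x^{k + 1/2} / Γ(k + 3/2) = (2/√π) e^{-x} ∫_0^{√x} e^{t²} dt. -/

import Mathlib

open Finset intervalIntegral MeasureTheory Real

noncomputable def Paux (n : ℕ) : ℝ := ∏ i ∈ range n, (2 * (i:ℝ) + 2) / (2 * i + 3)

lemma Paux_pos (n : ℕ) : 0 < Paux n := Finset.prod_pos (fun i _ => by positivity)

lemma int_one_sub_sq (n : ℕ) : (∫ t in (-1:ℝ)..1, (1 - t^2)^n) = 2 * Paux n := by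
  have hsub : (∫ x in (0:ℝ)..π, (-Real.sin x) • ((1 - (Real.cos x)^2)^n)) =
      ∫ u in (Real.cos 0)..(Real.cos π), (1 - u^2)^n := by
    apply intervalIntegral.integral_comp_smul_deriv (f := Real.cos) (f' := fun x => -Real.sin x)
      (g := fun u => (1 - u^2)^n)
    · intro x _; exact (Real.hasDerivAt_cos x)
    · exact (Real.continuous_sin.neg).continuousOn
    · continuity
  rw [Real.cos_zero, Real.cos_pi] at hsub
  have h2 : (∫ x in (0:ℝ)..π, (-Real.sin x) • ((1 - (Real.cos x)^2)^n)) =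
      -∫ x in (0:ℝ)..π, Real.sin x ^ (2*n+1) := by
    rw [← intervalIntegral.integral_neg]
    congr 1; ext x
    have hs : (1 - Real.cos x ^ 2) = Real.sin x ^ 2 := by rw [Real.sin_sq]
    rw [hs, smul_eq_mul, ← pow_mul]
    ring
  rw [h2, integral_sin_pow_odd, intervalIntegral.integral_symm (-1:ℝ) 1] at hsub
  have : (∫ t in (-1:ℝ)..1, (1 - t^2)^n) = 2 * ∏ i ∈ range n, (2 * (i:ℝ) + 2) / (2 * i + 3) := by
    linarith [hsub]
  rw [this]; rfl

lemma int_one_sub_sq' (n : ℕ) : (∫ t in (0:ℝ)..1, (1 - t^2)^n) = Paux n := by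
  have hsplit : (∫ t in (-1:ℝ)..0, (1 - t^2)^n) + (∫ t in (0:ℝ)..1, (1 - t^2)^n)
      = ∫ t in (-1:ℝ)..1, (1 - t^2)^n := by
    apply intervalIntegral.integral_add_adjacent_intervals <;>
      apply Continuous.intervalIntegrable <;> continuity
  have hneg : (∫ t in (-1:ℝ)..0, (1 - t^2)^n) = ∫ t in (0:ℝ)..1, (1 - t^2)^n := by
    have := intervalIntegral.integral_comp_neg (a := (0:ℝ)) (b := 1)
      (f := fun t => (1 - t^2)^n)
    simp only [neg_zero, neg_neg, neg_one_sq] at this ⊢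
    rw [← this]
    congr 1; ext t; rw [neg_pow]; ring_nf
  rw [int_one_sub_sq] at hsplit
  rw [hneg] at hsplit
  linarith

lemma sum_eq_int (n : ℕ) :
    ∑ k ∈ range (n+1), (-1:ℝ)^k * (n.choose k) / (2*(k:ℝ)+1) = ∫ t in (0:ℝ)..1, (1 - t^2)^n := by
  have hexp : ∀ t : ℝ, (1 - t^2)^n = ∑ k ∈ range (n+1), (-1:ℝ)^k * (n.choose k) * t^(2*k) := by
    intro t
    have := add_pow (-(t^2)) 1 n
    simp only [one_pow, mul_one] at this
    rw [show (1 : ℝ) - t^2 = -(t^2) + 1 by ring, this]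
    apply Finset.sum_congr rfl
    intro k _
    rw [neg_pow, ← pow_mul]
    ring
  simp_rw [hexp]
  rw [intervalIntegral.integral_finset_sum]
  · apply Finset.sum_congr rfl
    intro k _
    rw [intervalIntegral.integral_const_mul, integral_pow]
    push_cast
    field_simp
    simp
  · intro k _
    apply Continuous.intervalIntegrable
    continuity

lemma sum_eq_Paux (n : ℕ) :
    ∑ k ∈ range (n+1), (-1:ℝ)^k * (n.choose k) / (2*(k:ℝ)+1) = Paux n := by
  rw [sum_eq_int, int_one_sub_sq']

lemma Gamma_key (n : ℕ) :
    Real.Gamma ((n:ℝ) + 3/2) = Real.sqrt π * (n.factorial) / (2 * Paux n) := by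
  induction n with
  | zero =>
    simp only [Nat.cast_zero, zero_add, Nat.factorial_zero, Nat.cast_one, Paux, range_zero,
      prod_empty]
    rw [show (3/2 : ℝ) = 1/2 + 1 by norm_num, Real.Gamma_add_one (by norm_num),
      Real.Gamma_one_half_eq]
    ring
  | succ n ih =>
    have h1 : ((n:ℝ) + 1) + 3/2 = ((n:ℝ) + 3/2) + 1 := by ring
    have hP : Paux (n+1) = Paux n * ((2*n+2)/(2*n+3)) := by
      rw [Paux, prod_range_succ]; rfl
    push_cast
    rw [h1, Real.Gamma_add_one (by positivity), ih, hP, Nat.factorial_succ]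
    have := Paux_pos n
    push_cast
    field_simp

lemma exp_sq_tsum (t : ℝ) : Real.exp (t^2) = ∑' k : ℕ, t^(2*k) / (k.factorial) := by
  rw [Real.exp_eq_exp_ℝ, NormedSpace.exp_eq_tsum_div]
  exact tsum_congr fun k => by rw [← pow_mul]

lemma summable_c (s : ℝ) (hs : 0 ≤ s) :
    Summable (fun k : ℕ => s^(2*k+1) / ((k.factorial) * (2*(k:ℝ)+1))) := by
  have hg : Summable (fun k : ℕ => s * ((s^2)^k / k.factorial)) :=
    (Real.summable_pow_div_factorial (s^2)).mul_left s
  refine hg.of_nonneg_of_le (fun k => by positivity) (fun k => ?_)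
  have h1 : s^(2*k+1) = s * (s^2)^k := by rw [← pow_mul, pow_succ]; ring
  rw [h1, mul_div_assoc]
  refine mul_le_mul_of_nonneg_left ?_ hs
  refine div_le_div_of_nonneg_left (by positivity) (by positivity) ?_
  have h2 : (0:ℝ) < k.factorial := by positivity
  nlinarith [(Nat.cast_nonneg k : (0:ℝ) ≤ k)]

lemma int_exp_sq (s : ℝ) (hs : 0 ≤ s) :
    (∫ t in (0:ℝ)..s, Real.exp (t^2)) = ∑' k : ℕ, s^(2*k+1) / ((k.factorial) * (2*(k:ℝ)+1)) := by
  have hval : ∀ k : ℕ, (∫ t in Set.Ioc (0:ℝ) s, t^(2*k) / (k.factorial)) =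
      s^(2*k+1) / ((k.factorial) * (2*(k:ℝ)+1)) := by
    intro k
    rw [← intervalIntegral.integral_of_le hs, intervalIntegral.integral_div, integral_pow,
      zero_pow (by omega), sub_zero]
    push_cast
    rw [div_div]
    ring_nf
  rw [intervalIntegral.integral_of_le hs]
  simp_rw [exp_sq_tsum]
  rw [← MeasureTheory.integral_tsum_of_summable_integral_norm]
  · exact tsum_congr hval
  · intro k
    exact ((continuous_pow (2*k)).div_const _).integrableOn_Ioc
  · have : ∀ k : ℕ, (∫ t in Set.Ioc (0:ℝ) s, ‖t^(2*k) / (k.factorial : ℝ)‖) =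
        s^(2*k+1) / ((k.factorial) * (2*(k:ℝ)+1)) := by
      intro k
      rw [← hval k]
      refine MeasureTheory.setIntegral_congr_fun measurableSet_Ioc fun t _ => ?_
      have ht : (0:ℝ) ≤ t^(2*k) / (k.factorial : ℝ) := by
        rw [pow_mul]; positivity
      rw [Real.norm_eq_abs, abs_of_nonneg ht]
    simp_rw [this]
    exact summable_c s hs

lemma key_n (s : ℝ) (n : ℕ) :
    (∑ kl ∈ antidiagonal n, ((-1:ℝ)^kl.1 * s^(2*kl.1) / kl.1.factorial) *
      (s^(2*kl.2+1) / (kl.2.factorial * (2*(kl.2:ℝ)+1))))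
    = (-1)^n * s^(2*n+1) * (Paux n) / n.factorial := by
  rw [Finset.Nat.sum_antidiagonal_eq_sum_range_succ
    (fun a b => ((-1:ℝ)^a * s^(2*a) / a.factorial) *
      (s^(2*b+1) / (b.factorial * (2*(b:ℝ)+1)))) n, ← Finset.sum_range_reflect]
  simp only [Nat.succ_sub_one, Nat.add_sub_cancel]
  have hterm : ∀ k ∈ range (n+1),
      ((-1:ℝ)^(n-k) * s^(2*(n-k)) / (n-k).factorial) *
        (s^(2*(n-(n-k))+1) / ((n-(n-k)).factorial * (2*((n-(n-k)):ℕ)+1)))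
      = ((-1)^n * s^(2*n+1) / n.factorial) * ((-1:ℝ)^k * (n.choose k) / (2*(k:ℝ)+1)) := by
    intro k hk
    rw [mem_range] at hk
    have hkn : k ≤ n := by omega
    have h1 : n - (n - k) = k := by omega
    rw [h1]
    have h2 : s^(2*(n-k)) * s^(2*k+1) = s^(2*n+1) := by
      rw [← pow_add]; congr 1; omega
    have h3 : (-1:ℝ)^n * (-1)^k = (-1)^(n-k) := by
      rw [← pow_add, show n + k = (n-k) + 2*k by omega, pow_add, pow_mul]; norm_num
    have hfact : ((n.choose k : ℝ)) * k.factorial * (n-k).factorial = n.factorial := by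
      exact_mod_cast Nat.choose_mul_factorial_mul_factorial hkn
    have hf1 : ((n-k).factorial:ℝ) ≠ 0 := by positivity
    have hf2 : (k.factorial:ℝ) ≠ 0 := by positivity
    have hf3 : (n.factorial:ℝ) ≠ 0 := by positivity
    have hinv : (((n-k).factorial:ℝ))⁻¹ * ((k.factorial:ℝ))⁻¹
        = (n.choose k : ℝ) * ((n.factorial:ℝ))⁻¹ := by
      field_simp
      linarith [hfact]
    calc ((-1:ℝ)^(n-k) * s^(2*(n-k)) / (n-k).factorial) *
          (s^(2*k+1) / (k.factorial * (2*(k:ℕ)+1)))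
        = ((-1:ℝ)^(n-k)) * (s^(2*(n-k)) * s^(2*k+1)) *
            ((((n-k).factorial:ℝ))⁻¹ * ((k.factorial:ℝ))⁻¹) * (2*(k:ℝ)+1)⁻¹ := by
          have hk2 : (2*(k:ℝ)+1) ≠ 0 := by positivity
          field_simp
      _ = ((-1:ℝ)^n * (-1)^k) * s^(2*n+1) *
            ((n.choose k : ℝ) * ((n.factorial:ℝ))⁻¹) * (2*(k:ℝ)+1)⁻¹ := by
          rw [h2, h3, hinv]
      _ = ((-1)^n * s^(2*n+1) / n.factorial) * ((-1:ℝ)^k * (n.choose k) / (2*(k:ℝ)+1)) := by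
          ring
  rw [Finset.sum_congr rfl hterm, ← Finset.mul_sum, sum_eq_Paux]
  ring

/-- For every `x ≥ 0`,
`sin_{1/2}(x^{1/2}) = ∑ (-1)^k x^{k+1/2}/Γ(k+3/2) = (2/√π) e^{-x} ∫_0^{√x} e^{t²} dt`. -/
theorem sin_half_eq (x : ℝ) (hx : 0 ≤ x) :
    (∑' k : ℕ, (-1 : ℝ) ^ k * x ^ ((k : ℝ) + 1/2) / Real.Gamma ((k : ℝ) + 3/2)) =
    (2 / Real.sqrt Real.pi) * Real.exp (-x) *
      ∫ t in (0 : ℝ)..Real.sqrt x, Real.exp (t ^ 2) := by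
  rcases eq_or_lt_of_le hx with h0 | hx0
  · rw [← h0]
    have hz : ∀ k : ℕ, (-1:ℝ)^k * (0:ℝ) ^ ((k:ℝ) + 1/2) / Real.Gamma ((k:ℝ) + 3/2) = 0 := by
      intro k
      rw [Real.zero_rpow (by positivity), mul_zero, zero_div]
    rw [tsum_congr hz, tsum_zero, Real.sqrt_zero, intervalIntegral.integral_same, mul_zero]
  · set s := Real.sqrt x with hsdef
    have hs : 0 < s := Real.sqrt_pos.2 hx0
    have hsx : s^2 = x := Real.sq_sqrt hx
    have hL : ∀ k : ℕ, (-1:ℝ)^k * x ^ ((k:ℝ) + 1/2) / Real.Gamma ((k:ℝ)+3/2)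
        = (-1:ℝ)^k * s^(2*k+1) / Real.Gamma ((k:ℝ)+3/2) := by
      intro k
      have : x ^ ((k:ℝ) + 1/2) = s^(2*k+1) := by
        rw [← hsx, ← Real.rpow_natCast s (2*k+1), ← Real.rpow_natCast s 2,
          ← Real.rpow_mul hs.le]
        congr 1
        push_cast
        ring
      rw [this]
    have hexpneg : Real.exp (-x) = ∑' j : ℕ, ((-1:ℝ)^j * s^(2*j) / j.factorial) := by
      rw [← hsx, Real.exp_eq_exp_ℝ, NormedSpace.exp_eq_tsum_div]
      refine tsum_congr fun j => ?_
      rw [neg_pow, ← pow_mul]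
    have hI := int_exp_sq s hs.le
    have hsb : Summable fun j : ℕ => ‖(-1:ℝ)^j * s^(2*j) / (j.factorial : ℝ)‖ := by
      have heq : ∀ j : ℕ, ‖(-1:ℝ)^j * s^(2*j) / (j.factorial : ℝ)‖ = (s^2)^j / j.factorial := by
        intro j
        rw [Real.norm_eq_abs, abs_div, abs_mul, abs_pow, abs_neg, abs_one, one_pow, one_mul,
          abs_pow, abs_of_nonneg hs.le, Nat.abs_cast, ← pow_mul]
      exact (summable_congr heq).2 (Real.summable_pow_div_factorial (s^2))
    have hsc : Summable fun k : ℕ => ‖s^(2*k+1) / ((k.factorial : ℝ) * (2*(k:ℝ)+1))‖ := by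
      refine (summable_congr fun k => ?_).2 (summable_c s hs.le)
      rw [Real.norm_eq_abs, abs_of_nonneg (by positivity)]
    have hC := tsum_mul_tsum_eq_tsum_sum_antidiagonal_of_summable_norm hsb hsc
    rw [hexpneg, hI, mul_assoc, hC, ← tsum_mul_left]
    refine tsum_congr fun n => ?_
    rw [hL n, key_n s n, Gamma_key n]
    have hP := Paux_pos n
    have hpi : (0:ℝ) < Real.sqrt π := Real.sqrt_pos.2 Real.pi_pos
    have hf : (0:ℝ) < (n.factorial : ℝ) := by positivity
    field_simp
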